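/- Let L/K be a finite abelian extension of fields with Galois group G and let H ≤ G be a subgroup. If x ∈ L satisfies Tr_{L/K}(x·g(x)) = δ_{1,g} for all g ∈ G, then the element y = Tr_{L/L^H}(x) = Σ_{h∈H} h(x) of the fixed field L^H satisfies Tr_{L^H/K}(y·g̃(y)) = δ_{1,g̃} for all g̃ ∈ G/H = Gal(L^H/K). -/
import Mathlib


open scoped Classical

/-- Let `L/K` be a finite abelian Galois extension with group `G` and `H ≤ G`.
If `x ∈ L` satisfies `Tr_{L/K}(x·g(x)) = δ_{1,g}` for all `g ∈ G`, then
`y = Σ_{h∈H} h(x)`, an element of the fixed field `L^H`, satisfies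
`Tr_{L^H/K}(y·τ(y)) = δ_{1,τ}` for all `τ ∈ Gal(L^H/K)`. -/
theorem stmt_13 (K L : Type*) [Field K] [Field L] [Algebra K L]
    [FiniteDimensional K L] [IsGalois K L]
    (hab : ∀ σ τ : L ≃ₐ[K] L, σ * τ = τ * σ)
    (H : Subgroup (L ≃ₐ[K] L))
    (x : L)
    (hx : ∀ g : L ≃ₐ[K] L, Algebra.trace K L (x * g x) = if g = 1 then 1 else 0) :
    ∃ y : IntermediateField.fixedField H,
      (y : L) = ∑ h : H, (h : L ≃ₐ[K] L) x ∧
      ∀ τ : IntermediateField.fixedField H ≃ₐ[K] IntermediateField.fixedField H,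
        Algebra.trace K (IntermediateField.fixedField H) (y * τ y) =
          if τ = 1 then 1 else 0 := by
  classical
  haveI hnorm : H.Normal := ⟨fun n hn g => by rw [hab g n, mul_inv_cancel_right]; exact hn⟩
  set F := IntermediateField.fixedField H with hF
  set y' : L := ∑ h : H, (h : L ≃ₐ[K] L) x with hy'
  -- y' is fixed by H
  have hfix : ∀ σ : H, (σ : L ≃ₐ[K] L) y' = y' := by
    intro σ
    rw [hy', map_sum]
    exact Fintype.sum_equiv (Equiv.mulLeft σ) _ _ fun h => rfl
  have hymem : y' ∈ F := fun σ => hfix σ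
  refine ⟨⟨y', hymem⟩, rfl, ?_⟩
  intro τ
  obtain ⟨g, hg⟩ := AlgEquiv.restrictNormalHom_surjective (K₁ := F) L τ
  -- the coercion of τ ⟨y', _⟩ is g y'
  have hcoe : ((τ ⟨y', hymem⟩ : F) : L) = g y' := by
    rw [← hg]; exact AlgEquiv.restrictNormalHom_apply F g ⟨y', hymem⟩
  -- g y' is fixed by H
  have hgyF : ∀ σ : H, (σ : L ≃ₐ[K] L) (g y') = g y' := by
    intro σ
    rw [← hcoe]
    exact (τ ⟨y', hymem⟩).2 σ
  -- trace from L to F as a sum over H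
  have htrF : ∀ w : L, (algebraMap F L) (Algebra.trace F L w) = ∑ h : H, (h : L ≃ₐ[K] L) w := by
    intro w
    rw [trace_eq_sum_automorphisms]
    refine Fintype.sum_equiv
      (((MulEquiv.subgroupCongr (IntermediateField.fixingSubgroup_fixedField H)).symm.trans
        (IntermediateField.fixingSubgroupEquiv F)).toEquiv.symm) _ _ fun σ => rfl
  -- trace from F to L of x * g y' equals y * τ y
  have key : Algebra.trace F L (x * g y') = ⟨y', hymem⟩ * τ ⟨y', hymem⟩ := by
    apply Subtype.coe_injective
    show (algebraMap F L) _ = _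
    rw [htrF]
    have : ∀ h : H, (h : L ≃ₐ[K] L) (x * g y') = (h : L ≃ₐ[K] L) x * g y' := by
      intro h; rw [map_mul, hgyF h]
    rw [Finset.sum_congr rfl fun h _ => this h, ← Finset.sum_mul]
    push_cast
    rw [hcoe]
  have tower : Algebra.trace K F (⟨y', hymem⟩ * τ ⟨y', hymem⟩) = Algebra.trace K L (x * g y') := by
    rw [← key, Algebra.trace_trace]
  rw [tower]
  -- expand g y'
  have hexp : x * g y' = ∑ h : H, x * (g * (h : L ≃ₐ[K] L)) x := by
    rw [hy', map_sum, Finset.mul_sum]; rfl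
  rw [hexp, map_sum]
  have hsum : ∀ h : H, Algebra.trace K L (x * (g * (h : L ≃ₐ[K] L)) x)
      = if g * (h : L ≃ₐ[K] L) = 1 then 1 else 0 := fun h => hx _
  rw [Finset.sum_congr rfl fun h _ => hsum h]
  -- the sum of indicators
  have hiff : τ = 1 ↔ g⁻¹ ∈ H := by
    have hker : g ∈ (AlgEquiv.restrictNormalHom F).ker ↔ g ∈ H := by
      rw [IntermediateField.restrictNormalHom_ker F, IntermediateField.fixingSubgroup_fixedField H]
    rw [inv_mem_iff, ← hker, MonoidHom.mem_ker, hg]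
  by_cases hτ : τ = 1
  · rw [if_pos hτ]
    have hg' : g⁻¹ ∈ H := hiff.mp hτ
    rw [Finset.sum_eq_single (⟨g⁻¹, hg'⟩ : H)]
    · simp
    · intro b _ hb
      rw [if_neg]
      intro hcon
      apply hb
      have : (b : L ≃ₐ[K] L) = g⁻¹ := by
        rw [eq_inv_iff_mul_eq_one, hab]; exact hcon
      exact Subtype.coe_injective this
    · intro hcon; exact absurd (Finset.mem_univ _) hcon
  · rw [if_neg hτ]
    apply Finset.sum_eq_zero
    intro h _
    rw [if_neg]
    intro hcon
    apply hτ
    apply hiff.mpr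
    have : (h : L ≃ₐ[K] L) = g⁻¹ := by rw [eq_inv_iff_mul_eq_one, hab]; exact hcon
    rw [← this]; exact h.2
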